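/- In any nonempty γ-proportional matching of the partition-reduction graph (donors 1..N with weights x_i adjacent to recipients 1 and 2, donor N+1 adjacent only to recipient 3 with weight T/(2γ), where T = Σ x_i and γ ∈ (0,1)), recipient 3 must be matched, and consequently recipients 1 and 2 each receive matched weight exactly T/2. -/

import Mathlib

/-- In any nonempty γ-proportional matching of the partition-reduction graph,
recipient 3 is matched, and recipients 1 and 2 each receive exactly T/2. -/
theorem stmt_2 (γ : ℝ) (hγ0 : 0 < γ) (hγ1 : γ < 1)
    (N : ℕ) (x : Fin N → ℕ) (hx : ∀ i, 0 < x i)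
    (T : ℕ) (hT : T = ∑ i, x i)
    (g : Fin N → Option (Fin 2)) (b : Bool)
    (Y1 Y2 Y3 : ℝ)
    (hY1 : Y1 = ∑ i ∈ Finset.univ.filter (fun i => g i = some 0), (x i : ℝ))
    (hY2 : Y2 = ∑ i ∈ Finset.univ.filter (fun i => g i = some 1), (x i : ℝ))
    (hY3 : Y3 = if b then (T : ℝ) / (2 * γ) else 0)
    (hnonempty : (∃ i, g i ≠ none) ∨ b = true)
    (hprop : γ * Y1 ≤ Y2 ∧ γ * Y2 ≤ Y1 ∧ γ * Y1 ≤ Y3 ∧ γ * Y3 ≤ Y1 ∧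
             γ * Y2 ≤ Y3 ∧ γ * Y3 ≤ Y2) :
    b = true ∧ Y1 = (T : ℝ) / 2 ∧ Y2 = (T : ℝ) / 2 := by
  obtain ⟨h12, h21, h13, h31, h23, h32⟩ := hprop
  have hY1nn : 0 ≤ Y1 := by
    rw [hY1]; exact Finset.sum_nonneg fun i _ => by positivity
  have hY2nn : 0 ≤ Y2 := by
    rw [hY2]; exact Finset.sum_nonneg fun i _ => by positivity
  have hb : b = true := by
    by_contra hb
    have hb' : b = false := by simpa using hb
    rw [hb'] at hY3
    simp at hY3
    have h1z : Y1 = 0 := le_antisymm (by nlinarith) hY1nn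
    have h2z : Y2 = 0 := le_antisymm (by nlinarith) hY2nn
    obtain ⟨i, hi⟩ := hnonempty.resolve_right (by simp [hb'])
    have hxpos : (0:ℝ) < x i := by exact_mod_cast hx i
    rcases hgi : g i with _ | j
    · exact hi hgi
    · fin_cases j
      · have := (Finset.sum_eq_zero_iff_of_nonneg
          (fun i _ => by positivity)).mp (hY1 ▸ h1z) i (by simp [hgi])
        linarith
      · have := (Finset.sum_eq_zero_iff_of_nonneg
          (fun i _ => by positivity)).mp (hY2 ▸ h2z) i (by simp [hgi])
        linarith
  rw [hb] at hY3
  simp at hY3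
  have hγY3 : γ * Y3 = (T:ℝ) / 2 := by
    rw [hY3]; field_simp
  have hsum : Y1 + Y2 ≤ (T:ℝ) := by
    have hd : Disjoint (Finset.univ.filter (fun i => g i = some 0))
        (Finset.univ.filter (fun i => g i = some 1)) := by
      rw [Finset.disjoint_filter]
      intro i _ h0 h1
      rw [h0] at h1
      simp at h1
    rw [hY1, hY2, ← Finset.sum_union hd]
    calc _ ≤ ∑ i : Fin N, (x i : ℝ) :=
          Finset.sum_le_sum_of_subset_of_nonneg (Finset.subset_univ _)
            (fun i _ _ => by positivity)
      _ = (T:ℝ) := by rw [hT]; push_cast; ring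
  refine ⟨hb, by linarith, by linarith⟩
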